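/- Let M = (M_k) be a log-convex sequence of positive reals with M_0 = 1, and suppose there is a constant C > 0 such that for all l ≥ 1 and all positive integers j_1,…,j_l with sum j, one has ∏_{i=1}^l M_{j_i}/j_i! ≤ C^j M_j/j!. Then the sequence k ↦ M_k^{1/k}/k (for k ≥ 1) is almost increasing, i.e., there is C' > 0 with M_k^{1/k}/k ≤ C' M_l^{1/l}/l for all 1 ≤ k < l. -/

import Mathlib

open scoped BigOperators

set_option maxHeartbeats 1000000

lemma pow_self_le_exp_mul_factorial : ∀ n : ℕ, (n : ℝ) ^ n ≤ Real.exp 1 ^ n * n.factorial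
  | 0 => by norm_num
  | (n+1) => by
    have hbase : ((n+1 : ℕ) : ℝ) ^ n ≤ Real.exp 1 * (n : ℝ) ^ n := by
      rcases Nat.eq_zero_or_pos n with h | h
      · subst h; simpa using Real.one_le_exp (by norm_num)
      · have hn : (0:ℝ) < n := by positivity
        have h1 : ((n+1:ℕ):ℝ) = n * (1 + 1/n) := by push_cast; field_simp
        have h2 : (1 + 1/(n:ℝ)) ≤ Real.exp (1/n) := by
          have := Real.add_one_le_exp (1/(n:ℝ)); linarith
        have h3 : (1 + 1/(n:ℝ)) ^ n ≤ Real.exp (1/n) ^ n :=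
          pow_le_pow_left₀ (by positivity) h2 n
        have h4 : Real.exp (1/(n:ℝ)) ^ n = Real.exp 1 := by
          rw [← Real.exp_nat_mul]; congr 1; field_simp
        calc ((n+1:ℕ):ℝ) ^ n = (n:ℝ)^n * (1 + 1/n)^n := by rw [h1, mul_pow]
          _ ≤ (n:ℝ)^n * Real.exp 1 := by
              exact mul_le_mul_of_nonneg_left (h4 ▸ h3) (by positivity)
          _ = Real.exp 1 * (n:ℝ)^n := by ring
    have IH := pow_self_le_exp_mul_factorial n
    have hpos : (0:ℝ) ≤ ((n+1:ℕ):ℝ) := by positivity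
    calc ((n+1:ℕ):ℝ) ^ (n+1) = ((n+1:ℕ):ℝ) ^ n * ((n+1:ℕ):ℝ) := by ring
      _ ≤ (Real.exp 1 * (n:ℝ)^n) * ((n+1:ℕ):ℝ) :=
          mul_le_mul_of_nonneg_right hbase hpos
      _ ≤ (Real.exp 1 * (Real.exp 1 ^ n * n.factorial)) * ((n+1:ℕ):ℝ) :=
          mul_le_mul_of_nonneg_right
            (mul_le_mul_of_nonneg_left IH (Real.exp_pos 1).le) hpos
      _ = Real.exp 1 ^ (n+1) * ((n+1) * n.factorial : ℕ) := by push_cast; ring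
      _ = Real.exp 1 ^ (n+1) * (n+1).factorial := by rw [Nat.factorial_succ]

lemma factorial_add_le' (k r : ℕ) (h : r ≤ k) : (k + r).factorial ≤ k.factorial * (2*k)^r := by
  induction r with
  | zero => simp
  | succ r ih =>
    have hr : r ≤ k := Nat.le_of_succ_le h
    calc (k + (r+1)).factorial = (k + r + 1) * (k + r).factorial := by
          rw [show k + (r+1) = (k+r) + 1 by ring, Nat.factorial_succ]
      _ ≤ (2*k) * (k.factorial * (2*k)^r) := Nat.mul_le_mul (by omega) (ih hr)
      _ = k.factorial * (2*k)^(r+1) := by ring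

section
variable (M : ℕ → ℝ) (hpos : ∀ k, 0 < M k) (hM0 : M 0 = 1)
  (hlc : ∀ k, 1 ≤ k → (M k) ^ 2 ≤ M (k - 1) * M (k + 1))

include hpos hM0 hlc in
lemma step_pow : ∀ n : ℕ, M n ^ (n+1) ≤ M (n+1) ^ n := by
  intro n
  induction n with
  | zero => simp [hM0]
  | succ n ih =>
    have h2 : M (n+1) ^ 2 ≤ M n * M (n+2) := by
      have := hlc (n+1) (by omega); simpa using this
    have hkey : (M (n+1) ^ (n+2)) * M (n+1) ^ n ≤ (M (n+2) ^ (n+1)) * M (n+1) ^ n := by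
      calc M (n+1) ^ (n+2) * M (n+1) ^ n = (M (n+1) ^ 2) ^ (n+1) := by ring
        _ ≤ (M n * M (n+2)) ^ (n+1) :=
            pow_le_pow_left₀ (pow_nonneg (hpos _).le _) h2 (n+1)
        _ = M n ^ (n+1) * M (n+2) ^ (n+1) := mul_pow _ _ _
        _ ≤ M (n+1) ^ n * M (n+2) ^ (n+1) :=
            mul_le_mul_of_nonneg_right ih (pow_nonneg (hpos _).le _)
        _ = M (n+2) ^ (n+1) * M (n+1) ^ n := by ring
    exact le_of_mul_le_mul_right hkey (pow_pos (hpos _) _)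

include hpos hM0 hlc in
lemma mono_pow : ∀ a b : ℕ, a ≤ b → M a ^ b ≤ M b ^ a := by
  intro a b hab
  induction b, hab using Nat.le_induction with
  | base => rfl
  | succ b hab ih =>
    rcases Nat.eq_zero_or_pos b with hb | hb
    · have ha : a = 0 := by omega
      subst ha hb; simp [hM0]
    · have hkey : (M a ^ (b+1)) ^ b ≤ (M (b+1) ^ a) ^ b := by
        calc (M a ^ (b+1)) ^ b = (M a ^ b) ^ (b+1) := by ring
          _ ≤ (M b ^ a) ^ (b+1) := pow_le_pow_left₀ (pow_nonneg (hpos _).le _) ih (b+1)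
          _ = (M b ^ (b+1)) ^ a := by ring
          _ ≤ (M (b+1) ^ b) ^ a :=
              pow_le_pow_left₀ (pow_nonneg (hpos _).le _) (step_pow M hpos hM0 hlc b) a
          _ = (M (b+1) ^ a) ^ b := by ring
      exact le_of_pow_le_pow_left₀ (by omega) (pow_nonneg (hpos _).le _) hkey
end

/-- If `M` is log-convex with `M 0 = 1` and products over compositions satisfy
`∏ M (j i)/(j i)! ≤ C^j * M j / j!`, then `k ↦ (M k)^(1/k) / k` is almost increasing. -/
theorem almost_increasing_of_prod (M : ℕ → ℝ) (hpos : ∀ k, 0 < M k) (hM0 : M 0 = 1)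
    (hlc : ∀ k, 1 ≤ k → (M k) ^ 2 ≤ M (k - 1) * M (k + 1))
    (C : ℝ) (hC : 0 < C)
    (hprod : ∀ l : ℕ, 1 ≤ l → ∀ j : Fin l → ℕ, (∀ i, 1 ≤ j i) →
      (∏ i, M (j i) / ((j i).factorial : ℝ)) ≤
        C ^ (∑ i, j i) * (M (∑ i, j i) / ((∑ i, j i).factorial : ℝ))) :
    ∃ C' : ℝ, 0 < C' ∧ ∀ k l : ℕ, 1 ≤ k → k < l →
      (M k) ^ ((1 : ℝ) / k) / k ≤ C' * ((M l) ^ ((1 : ℝ) / l) / l) := by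
  set e : ℝ := Real.exp 1 with he
  have he1 : (1:ℝ) ≤ e := Real.one_le_exp (by norm_num)
  set C₁ : ℝ := max C 1 with hC₁def
  have hC₁ : (1:ℝ) ≤ C₁ := le_max_right _ _
  set B : ℝ := 2 * e * C₁ with hBdef
  have hB1 : (1:ℝ) ≤ B := by nlinarith
  have hB0 : (0:ℝ) < B := by linarith
  refine ⟨B * e, by positivity, ?_⟩
  intro k l hk hkl
  -- positivity facts
  have hk0 : (0:ℝ) < k := by exact_mod_cast hk
  have hl1 : 1 ≤ l := le_of_lt (lt_of_le_of_lt hk hkl)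
  have hl0 : (0:ℝ) < l := by exact_mod_cast hl1
  have hFk : (0:ℝ) < (k.factorial : ℝ) := by exact_mod_cast k.factorial_pos
  have hFl : (0:ℝ) < (l.factorial : ℝ) := by exact_mod_cast l.factorial_pos
  set x : ℝ := M k / (k.factorial : ℝ) with hxdef
  set y : ℝ := M l / (l.factorial : ℝ) with hydef
  have hx : 0 < x := div_pos (hpos k) hFk
  have hy : 0 < y := div_pos (hpos l) hFl
  -- the core inequality
  have hcore : x ^ l ≤ B ^ (k * l) * y ^ k := by
    -- decompose l = k*(q'+1) + r
    obtain ⟨q', hq'⟩ : ∃ q', l / k = q' + 1 := by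
      have : 1 ≤ l / k := Nat.one_le_div_iff (by omega) |>.mpr (le_of_lt hkl)
      exact ⟨l / k - 1, by omega⟩
    set r : ℕ := l % k with hrdef
    have hrk : r < k := Nat.mod_lt _ (by omega)
    have hlsum : l = (k + r) + q' * k := by
      have h := Nat.div_add_mod l k
      rw [hq'] at h
      have h2 : k * (q' + 1) = q' * k + k := by ring
      omega
    have hFkr : (0:ℝ) < ((k+r).factorial : ℝ) := by exact_mod_cast (k+r).factorial_pos
    -- apply hprod to the composition (k+r, k, k, ..., k)
    set j : Fin (q' + 1) → ℕ := Fin.cons (k + r) (fun _ => k) with hjdef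
    have hj1 : ∀ i, 1 ≤ j i := by
      intro i
      refine Fin.cases ?_ ?_ i <;> simp [hjdef] <;> omega
    have hsumj : ∑ i, j i = l := by
      rw [Fin.sum_univ_succ]
      simp [hjdef, hlsum, mul_comm]
    have key1 : (M (k+r) / ((k+r).factorial : ℝ)) * x ^ q' ≤ C ^ l * y := by
      have h := hprod (q' + 1) (by omega) j hj1
      rw [hsumj] at h
      rw [Fin.prod_univ_succ] at h
      simpa [hjdef, hxdef, hydef, div_pow] using h
    -- Claim A : x^(k+r) ≤ (2e)^(r*k) * (M(k+r)/(k+r)!)^k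
    have hMm : M k ^ (k + r) ≤ M (k + r) ^ k :=
      mono_pow M hpos hM0 hlc k (k + r) (by omega)
    have hfact : ((k+r).factorial : ℝ) ≤ (k.factorial : ℝ) * (2*(k:ℝ))^r := by
      have := factorial_add_le' k r (le_of_lt hrk)
      exact_mod_cast this
    have hkk : (k:ℝ)^k ≤ e ^ k * (k.factorial : ℝ) := pow_self_le_exp_mul_factorial k
    have claimA' : M k ^ (k+r) * ((k+r).factorial : ℝ) ^ k ≤
        (2*e)^(r*k) * M (k+r) ^ k * (k.factorial : ℝ) ^ (k+r) := by
      calc M k ^ (k+r) * ((k+r).factorial : ℝ) ^ k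
          ≤ M (k+r) ^ k * (((k.factorial : ℝ)) * (2*(k:ℝ))^r) ^ k :=
            mul_le_mul hMm (pow_le_pow_left₀ (by positivity) hfact k)
              (by positivity) (pow_nonneg (hpos _).le _)
        _ = M (k+r) ^ k * (k.factorial : ℝ) ^ k * ((2:ℝ)^(r*k) * (((k:ℝ))^k)^r) := by ring
        _ ≤ M (k+r) ^ k * (k.factorial : ℝ) ^ k * ((2:ℝ)^(r*k) * (e ^ k * (k.factorial:ℝ))^r) := by
            have h1 : (((k:ℝ))^k)^r ≤ (e ^ k * (k.factorial:ℝ))^r :=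
              pow_le_pow_left₀ (by positivity) hkk r
            have h2 : (0:ℝ) ≤ M (k+r) ^ k * (k.factorial : ℝ) ^ k :=
              mul_nonneg (pow_nonneg (hpos _).le _) (by positivity)
            nlinarith [pow_pos (show (0:ℝ) < 2 by norm_num) (r*k), h2,
              mul_le_mul_of_nonneg_left h1 (pow_nonneg (show (0:ℝ) ≤ 2 by norm_num) (r*k))]
        _ = (2*e)^(r*k) * M (k+r) ^ k * (k.factorial : ℝ) ^ (k+r) := by ring
    have claimA : x ^ (k+r) ≤ ((2*e)^(r*k) * M (k+r) ^ k) / ((k+r).factorial : ℝ) ^ k := by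
      rw [hxdef, div_pow, div_le_div_iff₀ (by positivity) (by positivity)]
      calc M k ^ (k+r) * ((k+r).factorial : ℝ) ^ k
          ≤ (2*e)^(r*k) * M (k+r) ^ k * (k.factorial : ℝ) ^ (k+r) := claimA'
        _ = (2*e)^(r*k) * M (k+r) ^ k * ((k.factorial : ℝ)) ^ (k+r) := by ring
    -- raise key1 to the k-th power
    have key2 : ((M (k+r) / ((k+r).factorial : ℝ)) * x ^ q') ^ k ≤ (C ^ l * y) ^ k :=
      pow_le_pow_left₀ (mul_nonneg (div_nonneg (hpos _).le hFkr.le) (pow_nonneg hx.le _)) key1 k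
    have key3 : (M (k+r) / ((k+r).factorial : ℝ)) ^ k * x ^ (q' * k) ≤ C ^ (l*k) * y ^ k := by
      calc (M (k+r) / ((k+r).factorial : ℝ)) ^ k * x ^ (q' * k)
          = ((M (k+r) / ((k+r).factorial : ℝ)) * x ^ q') ^ k := by
            rw [mul_pow, ← pow_mul]
        _ ≤ (C ^ l * y) ^ k := key2
        _ = C ^ (l*k) * y ^ k := by rw [mul_pow, ← pow_mul]
    calc x ^ l = x ^ (k+r) * x ^ (q' * k) := by rw [← pow_add, ← hlsum]
      _ ≤ (((2*e)^(r*k) * M (k+r) ^ k) / ((k+r).factorial : ℝ) ^ k) * x ^ (q' * k) :=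
          mul_le_mul_of_nonneg_right claimA (pow_nonneg hx.le _)
      _ = (2*e)^(r*k) * ((M (k+r) / ((k+r).factorial : ℝ)) ^ k * x ^ (q' * k)) := by
          rw [div_pow]; ring
      _ ≤ (2*e)^(r*k) * (C ^ (l*k) * y ^ k) :=
          mul_le_mul_of_nonneg_left key3 (by positivity)
      _ ≤ (2*e)^(l*k) * (C₁ ^ (l*k) * y ^ k) := by
          have h1 : (2*e)^(r*k) ≤ (2*e)^(l*k) :=
            pow_le_pow_right₀ (by linarith) (Nat.mul_le_mul_right k (by omega))
          have h2 : C ^ (l*k) ≤ C₁ ^ (l*k) :=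
            pow_le_pow_left₀ hC.le (le_max_left _ _) _
          have hy' : (0:ℝ) ≤ y ^ k := pow_nonneg hy.le _
          calc (2*e)^(r*k) * (C ^ (l*k) * y ^ k)
              ≤ (2*e)^(l*k) * (C ^ (l*k) * y ^ k) :=
                mul_le_mul_of_nonneg_right h1
                  (mul_nonneg (pow_nonneg hC.le _) hy')
            _ ≤ (2*e)^(l*k) * (C₁ ^ (l*k) * y ^ k) :=
                mul_le_mul_of_nonneg_left
                  (mul_le_mul_of_nonneg_right h2 hy')
                  (pow_nonneg (by linarith) _)
      _ = B ^ (k * l) * y ^ k := by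
          rw [show k * l = l * k from Nat.mul_comm k l, hBdef]; ring
  -- now pass to rpow
  have hkl0 : (0:ℝ) < (k:ℝ) * l := by positivity
  have h2 : x ^ ((1:ℝ)/k) ≤ B * y ^ ((1:ℝ)/l) := by
    have hr := Real.rpow_le_rpow (by positivity) hcore (le_of_lt (one_div_pos.mpr hkl0))
    have e1 : (x ^ l) ^ ((1:ℝ)/((k:ℝ)*l)) = x ^ ((1:ℝ)/k) := by
      rw [← Real.rpow_natCast x l, ← Real.rpow_mul hx.le]
      congr 1
      rw [mul_one_div, div_mul_eq_div_div_swap, div_self hl0.ne']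
    have e2 : (B ^ (k*l) * y ^ k) ^ ((1:ℝ)/((k:ℝ)*l)) = B * y ^ ((1:ℝ)/l) := by
      rw [Real.mul_rpow (by positivity) (by positivity),
        ← Real.rpow_natCast B (k*l), ← Real.rpow_natCast y k,
        ← Real.rpow_mul hB0.le, ← Real.rpow_mul hy.le]
      have c1 : ((k*l : ℕ) : ℝ) * ((1:ℝ)/((k:ℝ)*l)) = 1 := by
        push_cast
        rw [mul_one_div, div_self hkl0.ne']
      have c2 : ((k : ℕ) : ℝ) * ((1:ℝ)/((k:ℝ)*l)) = 1/l := by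
        push_cast
        rw [mul_one_div, div_mul_eq_div_div, div_self hk0.ne']
      rw [c1, c2, Real.rpow_one]
    rw [e1, e2] at hr
    exact hr
  have h3 : (M k) ^ ((1:ℝ)/k) / k ≤ x ^ ((1:ℝ)/k) := by
    have hxk : M k / ((k:ℝ)^k) ≤ x := by
      apply div_le_div_of_nonneg_left (hpos k).le (by positivity)
      exact_mod_cast Nat.factorial_le_pow k
    have e3 : (M k / ((k:ℝ)^k)) ^ ((1:ℝ)/k) = (M k) ^ ((1:ℝ)/k) / k := by
      rw [Real.div_rpow (hpos k).le (by positivity)]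
      congr 1
      rw [← Real.rpow_natCast (k:ℝ) k, ← Real.rpow_mul hk0.le]
      rw [show (k:ℝ) * ((1:ℝ)/k) = 1 by field_simp]
      exact Real.rpow_one _
    calc (M k) ^ ((1:ℝ)/k) / k = (M k / ((k:ℝ)^k)) ^ ((1:ℝ)/k) := e3.symm
      _ ≤ x ^ ((1:ℝ)/k) := Real.rpow_le_rpow (div_nonneg (hpos k).le (by positivity)) hxk (by positivity)
  have h4 : y ^ ((1:ℝ)/l) ≤ e * ((M l) ^ ((1:ℝ)/l) / l) := by
    have hyl : y ≤ M l * e^l / ((l:ℝ)^l) := by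
      rw [hydef, div_le_div_iff₀ hFl (by positivity)]
      calc M l * (l:ℝ)^l ≤ M l * (e^l * (l.factorial:ℝ)) :=
            mul_le_mul_of_nonneg_left (pow_self_le_exp_mul_factorial l) (hpos l).le
        _ = M l * e^l * (l.factorial:ℝ) := by ring
    have e4 : (M l * e^l / ((l:ℝ)^l)) ^ ((1:ℝ)/l) = e * ((M l) ^ ((1:ℝ)/l) / l) := by
      rw [Real.div_rpow (mul_nonneg (hpos l).le (by positivity)) (by positivity),
        Real.mul_rpow (hpos l).le (by positivity)]
      have q1 : ((e:ℝ)^l) ^ ((1:ℝ)/l) = e := by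
        rw [← Real.rpow_natCast e l, ← Real.rpow_mul (by positivity)]
        rw [show (l:ℝ) * ((1:ℝ)/l) = 1 by field_simp]
        exact Real.rpow_one _
      have q2 : (((l:ℝ))^l) ^ ((1:ℝ)/l) = (l:ℝ) := by
        rw [← Real.rpow_natCast (l:ℝ) l, ← Real.rpow_mul hl0.le]
        rw [show (l:ℝ) * ((1:ℝ)/l) = 1 by field_simp]
        exact Real.rpow_one _
      rw [q1, q2]; ring
    calc y ^ ((1:ℝ)/l) ≤ (M l * e^l / ((l:ℝ)^l)) ^ ((1:ℝ)/l) :=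
          Real.rpow_le_rpow hy.le hyl (by positivity)
      _ = e * ((M l) ^ ((1:ℝ)/l) / l) := e4
  calc (M k) ^ ((1:ℝ)/k) / k ≤ x ^ ((1:ℝ)/k) := h3
    _ ≤ B * y ^ ((1:ℝ)/l) := h2
    _ ≤ B * (e * ((M l) ^ ((1:ℝ)/l) / l)) := mul_le_mul_of_nonneg_left h4 hB0.le
    _ = (B * e) * ((M l) ^ ((1:ℝ)/l) / l) := by ring
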